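/- Suppose a ∈ ℝ is transcendental over ℚ. Then the quantized system with parameter a and input set U is ULI if and only if it is ULDI. -/

import Mathlib

set_option maxHeartbeats 1000000

noncomputable section

def traj (a x₀ : ℝ) (u : ℕ → ℝ) : ℕ → ℝ
  | 0 => x₀
  | k + 1 => a * traj a x₀ u k + u (k + 1)

lemma traj_sub (a x₀ x₀' : ℝ) (u u' : ℕ → ℝ) (j : ℕ) :
    traj a x₀ u j - traj a x₀' u' j = traj a (x₀ - x₀') (fun i => u i - u' i) j := by
  induction j with
  | zero => simp [traj]
  | succ n ih => simp only [traj, ← ih]; ring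

lemma traj_zero_input (a x₀ : ℝ) (j : ℕ) : traj a x₀ (fun _ => (0:ℝ)) j = a ^ j * x₀ := by
  induction j with
  | zero => simp [traj]
  | succ n ih => simp only [traj, ih, pow_succ]; ring

lemma traj_decomp (a t : ℝ) (u : ℕ → ℝ) (j : ℕ) :
    traj a t u j = a ^ j * t + traj a 0 u j := by
  have h := traj_sub a t 0 u u j
  simp only [sub_self, sub_zero] at h
  rw [traj_zero_input] at h
  linarith

lemma floor_ne_of_one_le_abs {x y : ℝ} (h : 1 ≤ |x - y|) : ⌊x⌋ ≠ ⌊y⌋ := by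
  intro he
  have h1 : x < ⌊x⌋ + 1 := Int.lt_floor_add_one x
  have h2 : (⌊x⌋ : ℝ) ≤ x := Int.floor_le x
  have h3 : y < ⌊y⌋ + 1 := Int.lt_floor_add_one y
  have h4 : (⌊y⌋ : ℝ) ≤ y := Int.floor_le y
  rw [he] at h1 h2
  rcases abs_cases (x - y) with ⟨he2, _⟩ | ⟨he2, _⟩ <;> linarith

lemma powers_indep {a : ℝ} (htr : Transcendental ℚ a) (m n : ℕ) :
    ∀ q : Fin n → ℤ, (∑ i, (q i : ℝ) * a^(m + (i:ℕ))) = 0 → ∀ i, q i = 0 := by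
  intro q hsum
  by_contra hq
  push_neg at hq
  obtain ⟨i₀, hi₀⟩ := hq
  apply htr
  refine ⟨∑ i, Polynomial.C ((q i : ℚ)) * Polynomial.X^(m + (i:ℕ)), ?_, ?_⟩
  · -- nonzero polynomial
    intro hp0
    apply hi₀
    have hcoeff : (∑ i, Polynomial.C ((q i : ℚ)) * Polynomial.X^(m + (i:ℕ))).coeff (m + (i₀:ℕ))
        = (q i₀ : ℚ) := by
      rw [Polynomial.finset_sum_coeff, Finset.sum_eq_single i₀]
      · simp [Polynomial.coeff_C_mul, Polynomial.coeff_X_pow]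
      · intro i _ hne
        have : ¬ (m + (i₀:ℕ) = m + (i:ℕ)) := by
          intro h
          exact hne (Fin.ext (by omega))
        simp [Polynomial.coeff_C_mul, Polynomial.coeff_X_pow, this]
        omega
      · intro h
        exact absurd (Finset.mem_univ i₀) h
    rw [hp0] at hcoeff
    simp only [Polynomial.coeff_zero] at hcoeff
    exact_mod_cast hcoeff.symm
  · rw [map_sum, ← hsum]
    apply Finset.sum_congr rfl
    intro i _
    simp only [map_mul, Polynomial.aeval_C, map_pow, Polynomial.aeval_X, map_intCast]


open Finset in
lemma factor_expand (y : ℝ) (N : ℕ) :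
    (((1 + Real.cos y)/2 : ℝ) : ℂ)^N
      = ∑ k ∈ Finset.range (2*N+1),
          ((2*N).choose k : ℂ)/4^N * Complex.exp (Complex.I * (((k:ℂ) - N) * y)) := by
  set u : ℂ := Complex.exp (Complex.I * y / 2) with hu_def
  have hu : u ≠ 0 := Complex.exp_ne_zero _
  have huinv : u⁻¹ = Complex.exp (-(Complex.I * y / 2)) := by
    rw [← Complex.exp_neg]
  have hu2 : u ^ 2 = Complex.exp (Complex.I * y) := by
    rw [hu_def, ← Complex.exp_nat_mul]
    congr 1; push_cast; ring
  have huinv2 : u⁻¹ ^ 2 = Complex.exp (-(Complex.I * y)) := by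
    rw [huinv, ← Complex.exp_nat_mul]
    congr 1; push_cast; ring
  have hcos : ((1 + Real.cos y : ℝ) : ℂ)/2 = ((u + u⁻¹)/2)^2 := by
    have h2c := Complex.two_cos (y : ℂ)
    have huu : u * u⁻¹ = 1 := mul_inv_cancel₀ hu
    have hexp : Complex.exp ((y:ℂ) * Complex.I) = Complex.exp (Complex.I * y) := by ring_nf
    have hexp' : Complex.exp (-(y:ℂ) * Complex.I) = Complex.exp (-(Complex.I * y)) := by ring_nf
    push_cast [Complex.ofReal_cos]
    have expand : ((u + u⁻¹)/2)^2 = (u^2 + u⁻¹^2 + 2 * (u * u⁻¹)) / 4 := by ring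
    rw [expand, huu, hu2, huinv2, ← hexp, ← hexp', ← h2c]
    ring
  have hL : (((1 + Real.cos y)/2 : ℝ) : ℂ)^N = (u + u⁻¹)^(2*N) / 4^N := by
    push_cast
    rw [show ((1:ℂ) + Complex.cos y)/2 = ((u + u⁻¹)/2)^2 by
          rw [← hcos]; push_cast [Complex.ofReal_cos]; ring]
    rw [← pow_mul, div_pow, mul_comm 2 N, pow_mul (2:ℂ) N 2]
    rw [show ((2:ℂ)^N)^2 = 4^N by rw [← pow_mul, mul_comm, pow_mul]; norm_num]
  rw [hL, add_pow]
  rw [Finset.sum_div]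
  refine Finset.sum_congr rfl ?_
  intro k hk
  have hk' : k ≤ 2*N := by simpa using Nat.lt_succ_iff.mp (Finset.mem_range.mp hk)
  have h1 : u ^ k = Complex.exp ((k:ℂ) * (Complex.I * y / 2)) := (Complex.exp_nat_mul _ k).symm
  have h2 : u⁻¹ ^ (2*N - k) = Complex.exp (((2*N - k : ℕ):ℂ) * (-(Complex.I * y / 2))) := by
    rw [huinv]; exact (Complex.exp_nat_mul _ _).symm
  rw [h1, h2, ← Complex.exp_add,
      show ((k:ℂ) * (Complex.I * (y:ℂ) / 2) + ((2 * N - k : ℕ):ℂ) * -(Complex.I * (y:ℂ) / 2))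
        = Complex.I * (((k:ℂ) - N) * y) by push_cast [Nat.cast_sub hk']; ring]
  ring



lemma exp_integral_bound (lam T : ℝ) (hlam : lam ≠ 0) :
    ‖∫ t in (0:ℝ)..T, Complex.exp (Complex.I * lam * t)‖ ≤ 2/|lam| := by
  have hc : (Complex.I * (lam:ℂ)) ≠ 0 :=
    mul_ne_zero Complex.I_ne_zero (Complex.ofReal_ne_zero.mpr hlam)
  have heq : (∫ t in (0:ℝ)..T, Complex.exp (Complex.I * (lam:ℂ) * t))
      = (Complex.exp (Complex.I * lam * T) - Complex.exp (Complex.I * lam * 0)) / (Complex.I * lam) := by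
    simpa using integral_exp_mul_complex (a := 0) (b := T) hc
  rw [heq, norm_div]
  have habs1 : ‖Complex.exp (Complex.I * lam * T)‖ = 1 := by
    rw [show Complex.I * (lam:ℂ) * (T:ℂ) = ((lam*T : ℝ):ℂ) * Complex.I by push_cast; ring]
    exact Complex.norm_exp_ofReal_mul_I _
  have habs0 : ‖Complex.exp (Complex.I * lam * 0)‖ = 1 := by
    norm_num
  have hden : ‖Complex.I * lam‖ = |lam| := by
    simp
  rw [hden]
  have hnum : ‖Complex.exp (Complex.I * lam * T) - Complex.exp (Complex.I * lam * 0)‖ ≤ 2 := by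
    calc ‖Complex.exp (Complex.I * lam * T) - Complex.exp (Complex.I * lam * 0)‖
        ≤ ‖Complex.exp (Complex.I * lam * T)‖ + ‖Complex.exp (Complex.I * lam * 0)‖ := by
          simpa using
            norm_sub_le (Complex.exp (Complex.I * lam * T)) (Complex.exp (Complex.I * lam * 0))
      _ = 2 := by rw [habs1, habs0]; norm_num
  exact (div_le_div_iff_of_pos_right (abs_pos.mpr hlam)).mpr hnum

open Finset Filter Real in
lemma kron (n : ℕ) (α θ : Fin n → ℝ)
    (hind : ∀ q : Fin n → ℤ, (∑ i, (q i : ℝ) * α i) = 0 → ∀ i, q i = 0)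
    {ε : ℝ} (hε : 0 < ε) :
    ∃ t : ℝ, ∀ i, ∃ K : ℤ, |α i * t - θ i - K| < ε := by
  classical
  by_contra hcon
  push_neg at hcon
  -- hcon : ∀ t, ∃ i, ∀ K, ε ≤ |α i * t - θ i - K|
  have hπ := Real.pi_pos
  set ε' : ℝ := min ε (1/4) with hε'def
  have hε'0 : 0 < ε' := lt_min hε (by norm_num)
  have hε'14 : ε' ≤ 1/4 := min_le_right _ _
  have hε'ε : ε' ≤ ε := min_le_left _ _
  set ρ : ℝ := (1 + Real.cos (2*π*ε'))/2 with hρdef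
  have hρ0 : 0 ≤ ρ := by
    have := Real.neg_one_le_cos (2*π*ε')
    rw [hρdef]; linarith
  have hρ1 : ρ < 1 := by
    have hlt : Real.cos (2*π*ε') < Real.cos 0 := by
      apply Real.strictAntiOn_cos
      · exact Set.mem_Icc.mpr ⟨le_refl 0, le_of_lt hπ⟩
      · constructor
        · positivity
        · nlinarith
      · positivity
    rw [Real.cos_zero] at hlt
    rw [hρdef]; linarith
  -- pointwise factor bound
  have hfac : ∀ x : ℝ, (∀ K : ℤ, ε ≤ |x - K|) → (1 + Real.cos (2*π*x))/2 ≤ ρ := by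
    intro x hx
    have h1 : ε ≤ |x - round x| := hx (round x)
    have h2 : |x - round x| ≤ 1/2 := abs_sub_round x
    have harg : Real.cos (2*π*x) = Real.cos (2*π*|x - (round x : ℝ)|) := by
      have hsplit : 2*π*x = 2*π*(x - (round x : ℝ)) + (round x : ℝ) * (2*π) := by ring
      rw [hsplit, Real.cos_add_int_mul_two_pi, ← Real.cos_abs (2*π*(x - (round x:ℝ))),
        abs_mul, abs_of_pos (by positivity : (0:ℝ) < 2*π)]
    rw [harg]
    have hmono : Real.cos (2*π*|x - (round x:ℝ)|) ≤ Real.cos (2*π*ε') := by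
      apply Real.cos_le_cos_of_nonneg_of_le_pi
      · positivity
      · nlinarith
      · nlinarith
    rw [hρdef]; linarith
  -- choose N
  obtain ⟨N, hNlt, hN1⟩ : ∃ N : ℕ, ρ^N * (2*(N:ℝ)+1)^n < 1 ∧ 1 ≤ N := by
    have h3 : Tendsto (fun N : ℕ => (3:ℝ)^n * ((N:ℝ)^n * ρ^N)) atTop (nhds 0) := by
      have := (tendsto_pow_const_mul_const_pow_of_lt_one n hρ0 hρ1).const_mul ((3:ℝ)^n)
      simpa using this
    have h5 : ∀ᶠ N : ℕ in atTop, (3:ℝ)^n * ((N:ℝ)^n * ρ^N) < 1 :=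
      h3.eventually_lt_const (by norm_num)
    obtain ⟨N, hN1', hNge⟩ := (h5.and (eventually_ge_atTop 1)).exists
    refine ⟨N, ?_, hNge⟩
    have hle : ((2*(N:ℝ)+1))^n ≤ ((3:ℝ)*(N:ℝ))^n := by
      apply pow_le_pow_left₀ (by positivity)
      have : (1:ℝ) ≤ (N:ℝ) := by exact_mod_cast hNge
      linarith
    calc ρ^N * (2*(N:ℝ)+1)^n ≤ ρ^N * ((3:ℝ)*(N:ℝ))^n := by
          exact mul_le_mul_of_nonneg_left hle (pow_nonneg hρ0 N)
      _ = (3:ℝ)^n * ((N:ℝ)^n * ρ^N) := by rw [mul_pow]; ring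
      _ < 1 := hN1'
  -- setup
  set G : Finset (Fin n → ℕ) := Fintype.piFinset (fun _ : Fin n => Finset.range (2*N+1)) with hGdef
  set Λ : (Fin n → ℕ) → ℝ := fun g => ∑ i, ((g i : ℝ) - N) * α i with hΛdef
  set coef : (Fin n → ℕ) → ℂ := fun g =>
    (∏ i, (((2*N).choose (g i) : ℂ)/4^N)) *
      Complex.exp (Complex.I * (∑ i, ((g i : ℂ) - N) * (2*π*(-θ i)))) with hcoefdef
  set g₀ : Fin n → ℕ := fun _ => N with hg₀def
  set F : ℝ → ℝ := fun t => ∏ i, ((1 + Real.cos (2*π*(α i * t - θ i)))/2)^N with hFdef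
  have hΛc : ∀ g : Fin n → ℕ, ((Λ g : ℝ) : ℂ) = ∑ i, ((g i : ℂ) - N) * (α i : ℂ) := by
    intro g; rw [hΛdef]; push_cast; rfl
  -- expansion of F into exponentials
  have hexpand : ∀ t : ℝ, ((F t : ℝ) : ℂ)
      = ∑ g ∈ G, coef g * Complex.exp (Complex.I * (2*π*(Λ g)) * t) := by
    intro t
    rw [hFdef]
    simp only [Complex.ofReal_prod, Complex.ofReal_pow]
    rw [show (∏ i, ((((1 + Real.cos (2*π*(α i * t - θ i)))/2 : ℝ)):ℂ)^N)
        = ∏ i, ∑ k ∈ Finset.range (2*N+1), ((2*N).choose k : ℂ)/4^N *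
            Complex.exp (Complex.I * (((k:ℂ) - N) * ((2*π*(α i * t - θ i) : ℝ) : ℂ))) from
      prod_congr rfl (fun i _ => factor_expand _ N)]
    rw [Finset.prod_univ_sum]
    apply sum_congr rfl
    intro g hg
    rw [Finset.prod_mul_distrib, hcoefdef]
    have hprodexp : (∏ i, Complex.exp (Complex.I * (((g i : ℂ) - N) * ((2*π*(α i * t - θ i) : ℝ) : ℂ))))
        = Complex.exp (Complex.I * (∑ i, ((g i : ℂ) - N) * (2*π*(-θ i)))) *
          Complex.exp (Complex.I * (2*π*(Λ g)) * t) := by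
      rw [← Complex.exp_sum, ← Complex.exp_add]
      congr 1
      rw [hΛc, Finset.mul_sum, Finset.mul_sum, Finset.mul_sum, Finset.sum_mul,
        ← Finset.sum_add_distrib]
      apply Finset.sum_congr rfl
      intro i _
      push_cast
      ring
    rw [hprodexp]
    ring
  -- g₀ facts
  have hg₀G : g₀ ∈ G := by
    rw [hGdef, Fintype.mem_piFinset]
    intro i
    rw [hg₀def]
    simp only [Finset.mem_range]
    omega
  have hΛg₀ : Λ g₀ = 0 := by
    rw [hΛdef, hg₀def]
    simp
  set w0 : ℝ := (((2*N).choose N : ℝ)/4^N)^n with hw0def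
  have hw0pos : 0 < w0 := by
    rw [hw0def]
    have : (0:ℝ) < ((2*N).choose N : ℝ) := by
      exact_mod_cast Nat.choose_pos (by omega)
    positivity
  have hcoefg₀ : coef g₀ = ((w0 : ℝ) : ℂ) := by
    rw [hcoefdef, hg₀def, hw0def]
    simp only [sub_self, zero_mul, Finset.sum_const_zero, mul_zero, Complex.exp_zero, mul_one]
    rw [Finset.prod_const]
    push_cast
    simp [Finset.card_univ]
  -- nonzero frequencies
  have hΛne : ∀ g ∈ G.erase g₀, Λ g ≠ 0 := by
    intro g hg hΛ0
    have hgne : g ≠ g₀ := (Finset.mem_erase.mp hg).1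
    set q : Fin n → ℤ := fun i => (g i : ℤ) - N with hqdef
    have hsum : (∑ i, (q i : ℝ) * α i) = 0 := by
      rw [← hΛ0, hΛdef]
      apply Finset.sum_congr rfl
      intro i _
      rw [hqdef]
      push_cast
      ring
    have hq0 := hind q hsum
    apply hgne
    funext i
    have h : (g i : ℤ) - (N:ℤ) = 0 := hq0 i
    show g i = N
    omega
  -- ρ^N < w0
  have hchoose : (4:ℝ)^N ≤ (2*(N:ℝ)+1) * ((2*N).choose N : ℝ) := by
    have hnat : 4^N ≤ (2*N+1) * (2*N).choose N := by
      calc 4^N = 2^(2*N) := by rw [pow_mul]; norm_num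
        _ = ∑ k ∈ Finset.range (2*N+1), (2*N).choose k := (Nat.sum_range_choose (2*N)).symm
        _ ≤ (2*N+1) * (2*N).choose N := by
            have := Finset.sum_le_card_nsmul (Finset.range (2*N+1)) (fun k => (2*N).choose k)
              ((2*N).choose N) (fun k _ => by
                have := Nat.choose_le_centralBinom k N
                rwa [Nat.centralBinom_eq_two_mul_choose] at this)
            simpa [Finset.card_range, smul_eq_mul] using this
    exact_mod_cast hnat
  have hρNw0 : ρ^N < w0 := by
    have h2N1 : (0:ℝ) < 2*(N:ℝ)+1 := by positivity
    have h4N : (0:ℝ) < (4:ℝ)^N := by positivity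
    have hinv : (1:ℝ)/(2*(N:ℝ)+1) ≤ ((2*N).choose N : ℝ)/4^N := by
      rw [div_le_div_iff₀ h2N1 h4N]
      nlinarith [hchoose]
    calc ρ^N < 1/(2*(N:ℝ)+1)^n := (lt_div_iff₀ (by positivity)).mpr hNlt
      _ = ((1:ℝ)/(2*(N:ℝ)+1))^n := by rw [div_pow, one_pow]
      _ ≤ w0 := by
          rw [hw0def]
          exact pow_le_pow_left₀ (by positivity) hinv n
  -- constants B and T
  set B : ℝ := ∑ g ∈ G.erase g₀, ‖coef g‖ * (2/|2*π*Λ g|) with hBdef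
  have hB0 : 0 ≤ B := Finset.sum_nonneg (fun g _ => by positivity)
  have hδ : 0 < w0 - ρ^N := by linarith
  set T : ℝ := (B+1)/(w0 - ρ^N) with hTdef
  have hT : 0 < T := by rw [hTdef]; apply div_pos <;> linarith
  set J : (Fin n → ℕ) → ℂ :=
    fun g => ∫ t in (0:ℝ)..T, Complex.exp (Complex.I * (2*↑π*(Λ g : ℝ)) * (t:ℂ)) with hJdef
  -- continuity
  have hFcont : Continuous F := by
    rw [hFdef]
    apply continuous_finset_prod
    intro i _
    fun_prop
  -- integral identity
  have hIdent : (∫ t in (0:ℝ)..T, F t) = (∑ g ∈ G, coef g * J g).re := by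
    have h1 : ((∫ t in (0:ℝ)..T, F t : ℝ) : ℂ) = ∫ t in (0:ℝ)..T, ((F t : ℝ) : ℂ) :=
      (intervalIntegral.integral_ofReal).symm
    have h2 : (∫ t in (0:ℝ)..T, ((F t : ℝ) : ℂ))
        = ∫ t in (0:ℝ)..T, ∑ g ∈ G, coef g * Complex.exp (Complex.I * (2*↑π*(Λ g : ℝ)) * (t:ℂ)) := by
      apply intervalIntegral.integral_congr
      intro t _
      exact hexpand t
    have h3 : (∫ t in (0:ℝ)..T, ∑ g ∈ G, coef g * Complex.exp (Complex.I * (2*↑π*(Λ g : ℝ)) * (t:ℂ)))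
        = ∑ g ∈ G, ∫ t in (0:ℝ)..T, coef g * Complex.exp (Complex.I * (2*↑π*(Λ g : ℝ)) * (t:ℂ)) := by
      apply intervalIntegral.integral_finset_sum
      intro g _
      apply Continuous.intervalIntegrable
      fun_prop
    have h4 : (∑ g ∈ G, ∫ t in (0:ℝ)..T, coef g * Complex.exp (Complex.I * (2*↑π*(Λ g : ℝ)) * (t:ℂ)))
        = ∑ g ∈ G, coef g * J g := by
      apply Finset.sum_congr rfl
      intro g _
      rw [hJdef]
      exact intervalIntegral.integral_const_mul _ _
    calc (∫ t in (0:ℝ)..T, F t) = (((∫ t in (0:ℝ)..T, F t : ℝ)) : ℂ).re := (Complex.ofReal_re _).symm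
      _ = (∑ g ∈ G, coef g * J g).re := by rw [h1, h2, h3, h4]
  -- the g₀ term
  have hJg₀ : J g₀ = (T:ℂ) := by
    rw [hJdef]
    simp only [hΛg₀, Complex.ofReal_zero, mul_zero, zero_mul, Complex.exp_zero]
    simp [intervalIntegral.integral_const, Complex.real_smul]
  have hsplit : (∑ g ∈ G, coef g * J g) = ↑w0 * ↑T + ∑ g ∈ G.erase g₀, coef g * J g := by
    rw [← Finset.add_sum_erase G _ hg₀G, hcoefg₀, hJg₀]
  -- bound on the error sum
  have habsJ : ∀ g ∈ G.erase g₀, ‖J g‖ ≤ 2/|2*π*Λ g| := by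
    intro g hg
    have hlam : (2*π*Λ g) ≠ 0 := by
      have := hΛne g hg
      positivity
    have hb := exp_integral_bound (2*π*Λ g) T hlam
    rw [hJdef]
    have harg : (fun t : ℝ => Complex.exp (Complex.I * ((2*π*Λ g : ℝ):ℂ) * (t:ℂ)))
        = fun t : ℝ => Complex.exp (Complex.I * (2*↑π*(Λ g : ℝ)) * (t:ℂ)) := by
      funext t
      congr 1
      push_cast
      ring
    rw [harg] at hb
    exact hb
  have herr : ‖∑ g ∈ G.erase g₀, coef g * J g‖ ≤ B := by
    rw [hBdef]
    calc ‖∑ g ∈ G.erase g₀, coef g * J g‖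
        ≤ ∑ g ∈ G.erase g₀, ‖coef g * J g‖ := by
          simpa using norm_sum_le (G.erase g₀) (fun g => coef g * J g)
      _ ≤ ∑ g ∈ G.erase g₀, ‖coef g‖ * (2/|2*π*Λ g|) := by
          apply Finset.sum_le_sum
          intro g hg
          rw [norm_mul]
          exact mul_le_mul_of_nonneg_left (habsJ g hg) (norm_nonneg _)
  have hre : w0 * T - B ≤ (∑ g ∈ G, coef g * J g).re := by
    rw [hsplit, Complex.add_re]
    have h5 : (↑w0 * (↑T:ℂ)).re = w0 * T := by
      rw [← Complex.ofReal_mul, Complex.ofReal_re]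
    have h6 : -B ≤ (∑ g ∈ G.erase g₀, coef g * J g).re := by
      have := Complex.abs_re_le_norm (∑ g ∈ G.erase g₀, coef g * J g)
      have h7 := neg_abs_le ((∑ g ∈ G.erase g₀, coef g * J g).re)
      linarith
    linarith
  -- pointwise upper bound
  have hpt : ∀ t ∈ Set.Icc (0:ℝ) T, F t ≤ ρ^N := by
    intro t _
    obtain ⟨i₀, hi₀⟩ := hcon t
    have hnn : ∀ i : Fin n, 0 ≤ (1 + Real.cos (2*π*(α i * t - θ i)))/2 := by
      intro i
      have := Real.neg_one_le_cos (2*π*(α i * t - θ i))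
      linarith
    have hle1 : ∀ i : Fin n, (1 + Real.cos (2*π*(α i * t - θ i)))/2 ≤ 1 := by
      intro i
      have := Real.cos_le_one (2*π*(α i * t - θ i))
      linarith
    rw [hFdef]
    calc (∏ i, ((1 + Real.cos (2*π*(α i * t - θ i)))/2)^N)
        ≤ ((1 + Real.cos (2*π*(α i₀ * t - θ i₀)))/2)^N := by
          rw [← Finset.mul_prod_erase Finset.univ _ (Finset.mem_univ i₀)]
          have hrest : (∏ i ∈ Finset.univ.erase i₀, ((1 + Real.cos (2*π*(α i * t - θ i)))/2)^N) ≤ 1 :=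
            Finset.prod_le_one (fun i _ => pow_nonneg (hnn i) N)
              (fun i _ => pow_le_one₀ (hnn i) (hle1 i))
          exact mul_le_of_le_one_right (pow_nonneg (hnn i₀) N) hrest
      _ ≤ ρ^N := pow_le_pow_left₀ (hnn i₀) (hfac _ hi₀) N
  have hup : (∫ t in (0:ℝ)..T, F t) ≤ ρ^N * T := by
    calc (∫ t in (0:ℝ)..T, F t) ≤ ∫ _t in (0:ℝ)..T, ρ^N := by
          apply intervalIntegral.integral_mono_on (le_of_lt hT)
            (hFcont.intervalIntegrable _ _) intervalIntegrable_const hpt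
      _ = ρ^N * T := by
          simp [intervalIntegral.integral_const]
          ring
  have heq2 : w0 * T - B = ρ^N * T + 1 := by
    have h0 : (w0 - ρ^N) * T = B + 1 := by
      rw [hTdef, mul_comm, div_mul_cancel₀ _ (ne_of_gt hδ)]
    have h1 : w0 * T - ρ^N * T = B + 1 := by rw [← h0]; ring
    linarith
  rw [hIdent] at hup
  linarith

def UDist (a : ℝ) (k l : ℕ) (u u' : ℕ → ℝ) : Prop :=
  ∀ x₀ x₀' : ℝ, ∀ m : ℕ, m > l → u m ≠ u' m →
    ∃ j : ℕ, m ≤ j ∧ j ≤ m + k ∧ ⌊traj a x₀ u j⌋ ≠ ⌊traj a x₀' u' j⌋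

/-- The system is uniformly left invertible in k steps. -/
def ULIin (a : ℝ) (U : Set ℝ) (k : ℕ) : Prop :=
  ∃ l : ℕ, ∀ u u' : ℕ → ℝ, (∀ i, u i ∈ U) → (∀ i, u' i ∈ U) → UDist a k l u u'

/-- The system is uniformly left invertible. -/
def ULI (a : ℝ) (U : Set ℝ) : Prop := ∃ k, ULIin a U k

/-- The input sequences u, u′ are uniformly D-distinguishable in k steps with waiting time l. -/
def UDDist (a : ℝ) (k l : ℕ) (u u' : ℕ → ℝ) : Prop :=
  ∀ z₀ : ℝ, ∀ m : ℕ, m > l → u m - u' m ≠ 0 →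
    ∃ j : ℕ, m ≤ j ∧ j ≤ m + k ∧ 1 ≤ |traj a z₀ (fun i => u i - u' i) j|

/-- The system is uniformly left D-invertible in k steps. -/
def ULDIin (a : ℝ) (U : Set ℝ) (k : ℕ) : Prop :=
  ∃ l : ℕ, ∀ u u' : ℕ → ℝ, (∀ i, u i ∈ U) → (∀ i, u' i ∈ U) → UDDist a k l u u'

/-- The system is uniformly left D-invertible. -/
def ULDI (a : ℝ) (U : Set ℝ) : Prop := ∃ k, ULDIin a U k

/-- The set V = U − U of input differences. -/
def Vset (U : Set ℝ) : Set ℝ := {v | ∃ u ∈ U, ∃ u' ∈ U, v = u - u'}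


open Finset in
/-- if a is transcendental over ℚ, then the system is ULI iff it is ULDI. -/
theorem stmt8 (a : ℝ) (U : Set ℝ) (hfin : U.Finite) (hnt : U.Nontrivial)
    (htr : Transcendental ℚ a) :
    ULI a U ↔ ULDI a U := by
  constructor
  · -- ULI → ULDI
    rintro ⟨k, l, H⟩
    refine ⟨k, l, ?_⟩
    intro u u' hu hu' z₀ m hm hv
    by_contra hno
    push_neg at hno
    -- hno : ∀ j, m ≤ j → j ≤ m + k → |traj a z₀ (fun i => u i - u' i) j| < 1
    have hzlt : ∀ i : Fin (k+1), |traj a z₀ (fun i => u i - u' i) (m + (i:ℕ))| < 1 :=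
      fun i => hno (m + i) (Nat.le_add_right _ _) (by omega)
    set z : ℕ → ℝ := fun j => traj a z₀ (fun i => u i - u' i) j with hzdef
    set c : ℕ → ℝ := fun j => traj a 0 u' j with hcdef
    set ε : ℝ := Finset.univ.inf' Finset.univ_nonempty
      (fun i : Fin (k+1) => (1 - |z (m + (i:ℕ))|)/2) with hεdef
    have hε : 0 < ε := by
      rw [hεdef, Finset.lt_inf'_iff]
      intro i _
      have := hzlt i
      simp only [hzdef] at this ⊢
      linarith
    obtain ⟨t, ht⟩ := kron (k+1) (fun i => a^(m + (i:ℕ)))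
      (fun i => (1 - z (m + (i:ℕ)))/2 - c (m + (i:ℕ))) (powers_indep htr m (k+1)) hε
    obtain ⟨j, hj1, hj2, hj3⟩ := H u u' hu hu' (z₀ + t) t m hm
      (fun h => hv (by rw [h, sub_self]))
    apply hj3
    set i : Fin (k+1) := ⟨j - m, by omega⟩ with hidef
    have hmi : m + (i : ℕ) = j := by
      rw [hidef]
      simp only []
      omega
    obtain ⟨K, hK⟩ := ht i
    simp only [hmi] at hK
    -- hK : |a^j * t - ((1 - z j)/2 - c j) - K| < ε
    have hεle : ε ≤ (1 - |z j|)/2 := by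
      have h := Finset.inf'_le (fun i : Fin (k+1) => (1 - |z (m + (i:ℕ))|)/2) (Finset.mem_univ i)
      rw [hmi] at h
      exact h
    have hzj : |z j| < 1 := by
      have := hzlt i
      rw [hmi] at this
      exact this
    have hw : traj a t u' j = a^j * t + c j := traj_decomp a t u' j
    have hwz : traj a (z₀ + t) u j = (a^j * t + c j) + z j := by
      have hsub := traj_sub a (z₀ + t) t u u' j
      rw [show z₀ + t - t = z₀ by ring] at hsub
      have hzj' : z j = traj a z₀ (fun i => u i - u' i) j := rfl
      rw [hw] at hsub
      rw [hzj']
      linarith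
    have hKb := abs_lt.mp (lt_of_lt_of_le hK hεle)
    obtain ⟨hKb1, hKb2⟩ := hKb
    have habs1 := le_abs_self (z j)
    have habs2 := neg_abs_le (z j)
    have hfw : ⌊a^j * t + c j⌋ = K := by
      rw [Int.floor_eq_iff]
      constructor
      · linarith
      · push_cast
        linarith
    have hfwz : ⌊(a^j * t + c j) + z j⌋ = K := by
      rw [Int.floor_eq_iff]
      constructor
      · linarith
      · push_cast
        linarith
    rw [hw, hwz, hfw, hfwz]
  · -- ULDI → ULI
    rintro ⟨k, l, H⟩
    refine ⟨k, l, ?_⟩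
    intro u u' hu hu' x₀ x₀' m hm hne
    obtain ⟨j, h1, h2, h3⟩ := H u u' hu hu' (x₀ - x₀') m hm (sub_ne_zero.mpr hne)
    refine ⟨j, h1, h2, floor_ne_of_one_le_abs ?_⟩
    rw [traj_sub]
    exact h3
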